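/- arXiv:2105.03306 — 4 statements merged into one kernel-verified Lean document; each statement's English description precedes it below -/
import Mathlib

section
/- Let B ≥ 0, δ ≥ 0, P ≥ 0 be real numbers and let H, H̃ be nonzero K×N complex matrices with ‖H‖_F ≤ B and ‖H̃‖_F ≤ δ·‖H‖_F. Set Ĥ = H − H̃ and assume Ĥ ≠ 0. Then ‖ √P·(H Hᴴ)/‖H‖_F − √P·(Ĥ Ĥᴴ)/‖Ĥ‖_F ‖_F ≤ √P · B · δ · (1 + (2+δ)·B/‖Ĥ‖_F). -/
open Matrix

/-- Frobenius norm of a complex matrix. -/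
noncomputable def frobNorm {m n : Type*} [Fintype m] [Fintype n]
    (A : Matrix m n ℂ) : ℝ :=
  Real.sqrt (∑ i, ∑ j, ‖A i j‖ ^ 2)

attribute [local instance] Matrix.frobeniusSeminormedAddCommGroup
  Matrix.frobeniusNormedAddCommGroup Matrix.frobeniusNormedSpace

lemma frobNorm_eq_norm {m n : Type*} [Fintype m] [Fintype n] (A : Matrix m n ℂ) :
    frobNorm A = ‖A‖ := by
  rw [Matrix.frobenius_norm_def, frobNorm, Real.sqrt_eq_rpow]
  norm_num

set_option maxHeartbeats 1600000 in
/-- MRT part of Lemma 3: deviation between the true and estimated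
virtualization demand blocks under maximum-ratio transmission. -/
theorem mrt_demand_deviation_bound {K N : ℕ} (B δ P : ℝ)
    (hB : 0 ≤ B) (hδ : 0 ≤ δ) (hP : 0 ≤ P)
    (H Htilde : Matrix (Fin K) (Fin N) ℂ) (hHne : H ≠ 0) (hHtne : Htilde ≠ 0)
    (hHB : frobNorm H ≤ B) (hHt : frobNorm Htilde ≤ δ * frobNorm H)
    (Hhat : Matrix (Fin K) (Fin N) ℂ) (hHhat : Hhat = H - Htilde)
    (hne : Hhat ≠ 0) :
    frobNorm ((Real.sqrt P / frobNorm H) • (H * Hᴴ) -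
        (Real.sqrt P / frobNorm Hhat) • (Hhat * Hhatᴴ)) ≤
      Real.sqrt P * B * δ * (1 + (2 + δ) * B / frobNorm Hhat) := by
  subst hHhat
  simp only [frobNorm_eq_norm] at *
  set s := Real.sqrt P with hs_def
  have hs : 0 ≤ s := Real.sqrt_nonneg P
  set a := ‖H‖ with ha_def
  set b := ‖H - Htilde‖ with hb_def
  set t := ‖Htilde‖ with ht_def
  have ha : 0 < a := norm_pos_iff.mpr hHne
  have hb : 0 < b := norm_pos_iff.mpr hne
  have ht : 0 ≤ t := norm_nonneg _
  have hab : |b - a| ≤ t := by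
    have := abs_norm_sub_norm_le (H - Htilde) H
    simpa using this
  have habδ : |b - a| ≤ δ * a := hab.trans hHt
  -- the key matrix identity
  have hid : (s / a) • (H * Hᴴ) - (s / b) • ((H - Htilde) * (H - Htilde)ᴴ)
      = (s / a - s / b) • (H * Hᴴ) + (s / b) • (H * Htildeᴴ)
        + (s / b) • (Htilde * (H - Htilde)ᴴ) := by
    simp only [conjTranspose_sub, Matrix.sub_mul, Matrix.mul_sub]
    module
  rw [hid]
  have hnorm : ‖(s / a - s / b) • (H * Hᴴ) + (s / b) • (H * Htildeᴴ)
        + (s / b) • (Htilde * (H - Htilde)ᴴ)‖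
      ≤ |s / a - s / b| * (a * a) + (s / b) * (a * t) + (s / b) * (t * b) := by
    refine (norm_add₃_le).trans ?_
    have h1 : ‖(s / a - s / b) • (H * Hᴴ)‖ ≤ |s / a - s / b| * (a * a) := by
      rw [norm_smul, Real.norm_eq_abs]
      gcongr
      exact (Matrix.frobenius_norm_mul H Hᴴ).trans
        (by rw [Matrix.frobenius_norm_conjTranspose])
    have h2 : ‖(s / b) • (H * Htildeᴴ)‖ ≤ (s / b) * (a * t) := by
      rw [norm_smul, Real.norm_eq_abs, abs_of_nonneg (by positivity)]
      gcongr
      exact (Matrix.frobenius_norm_mul H Htildeᴴ).trans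
        (by rw [Matrix.frobenius_norm_conjTranspose])
    have h3 : ‖(s / b) • (Htilde * (H - Htilde)ᴴ)‖ ≤ (s / b) * (t * b) := by
      rw [norm_smul, Real.norm_eq_abs, abs_of_nonneg (by positivity)]
      gcongr
      exact (Matrix.frobenius_norm_mul Htilde (H - Htilde)ᴴ).trans
        (by rw [Matrix.frobenius_norm_conjTranspose])
    linarith
  refine hnorm.trans ?_
  -- now a pure real inequality
  have habs : |s / a - s / b| = s * |b - a| / (a * b) := by
    rw [show s / a - s / b = s * (b - a) / (a * b) by field_simp,
      abs_div, abs_mul, abs_of_nonneg hs, abs_of_pos (mul_pos ha hb)]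
  rw [habs]
  have t1 : s * |b - a| / (a * b) * (a * a) = s * (|b - a| * a) / b := by
    field_simp
  have t2 : s / b * (a * t) = s * (a * t) / b := by ring
  have t3 : s / b * (t * b) = s * (t * b) / b := by ring
  rw [t1, t2, t3, ← add_div, ← add_div, div_le_iff₀ hb,
    show s * B * δ * (1 + (2 + δ) * B / b) * b
      = s * B * δ * b + (2 + δ) * (s * δ * B * B) from by field_simp]
  have g1 : s * (|b - a| * a) ≤ s * (δ * B * B) := by
    have h : |b - a| * a ≤ δ * B * B := by
      calc |b - a| * a ≤ (δ * a) * a := by gcongr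
        _ ≤ (δ * B) * B := by gcongr
        _ = δ * B * B := by ring
    exact mul_le_mul_of_nonneg_left h hs
  have g2 : s * (a * t) ≤ s * (δ * B * B) := by
    have h : a * t ≤ δ * B * B := by
      calc a * t ≤ B * (δ * a) := by gcongr
        _ ≤ B * (δ * B) := by gcongr
        _ = δ * B * B := by ring
    exact mul_le_mul_of_nonneg_left h hs
  have g3 : s * (t * b) ≤ s * B * δ * b := by
    have h : t * b ≤ (δ * B) * b := by
      have h2 : t ≤ δ * B := hHt.trans (by gcongr)
      gcongr
    nlinarith [h]
  nlinarith [mul_nonneg (mul_nonneg (mul_nonneg hs hδ) hB) hB]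
end

section
/- Let U > 0, Z ≥ 0, B ≥ 0, δ ≥ 0, ζ ≥ 0, η ≥ 0, P_max ≥ 0 be real numbers, and define φ(H,V,D) = U‖HV − D‖_F² + Z‖V‖_F². Let H, Ĥ be K×N complex matrices, D, D̂ K×K complex matrices, and V*, V^opt N×K complex matrices satisfying: ‖H‖_F ≤ B, ‖H − Ĥ‖_F ≤ Bδ, ‖D‖_F ≤ ζB, ‖D̂‖_F ≤ ζB(1+δ), ‖D − D̂‖_F ≤ ηBδ, ‖V*‖_F² ≤ P_max, ‖V^opt‖_F² ≤ P_max, and φ(Ĥ, V*, D̂) ≤ φ(Ĥ, V^opt, D̂). Then φ(H, V*, D) − φ(H, V^opt, D) ≤ U·φ̄, where φ̄ = 2·[(2+δ)(P_max + ζη) + 2(ζ(1+δ) + η)·√P_max]·B²·δ. -/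
open Matrix

/-- The per-slot objective φ(H, V, D) = U‖HV − D‖_F² + Z‖V‖_F². -/
noncomputable def phi {K N K' : ℕ} (U Z : ℝ)
    (H : Matrix (Fin K) (Fin N) ℂ) (V : Matrix (Fin N) (Fin K') ℂ)
    (D : Matrix (Fin K) (Fin K') ℂ) : ℝ :=
  U * frobNorm (H * V - D) ^ 2 + Z * frobNorm V ^ 2

open Matrix

section Aux

variable {K K' N : ℕ}

/-- Flatten a matrix into a nested `PiLp 2` space. -/
noncomputable def flat (A : Matrix (Fin K) (Fin K') ℂ) :
    PiLp 2 (fun _ : Fin K => PiLp 2 fun _ : Fin K' => ℂ) :=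
  (WithLp.equiv 2 _).symm fun i => (WithLp.equiv 2 _).symm fun j => A i j

lemma flat_sub (A B : Matrix (Fin K) (Fin K') ℂ) : flat (A - B) = flat A - flat B := rfl

lemma frobNorm_eq (A : Matrix (Fin K) (Fin K') ℂ) : frobNorm A = ‖flat A‖ := by
  rw [frobNorm, PiLp.norm_eq_of_L2]
  congr 1
  refine Finset.sum_congr rfl fun i _ => ?_
  rw [PiLp.norm_eq_of_L2, Real.sq_sqrt (Finset.sum_nonneg fun j _ => sq_nonneg _)]
  rfl

lemma frobNorm_nonneg (A : Matrix (Fin K) (Fin K') ℂ) : 0 ≤ frobNorm A :=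
  Real.sqrt_nonneg _

attribute [local instance] Matrix.frobeniusSeminormedAddCommGroup

lemma frobNorm_eq_frobenius (A : Matrix (Fin K) (Fin K') ℂ) : frobNorm A = ‖A‖ := by
  rw [Matrix.frobenius_norm_def, frobNorm, Real.sqrt_eq_rpow]
  congr 1
  refine Finset.sum_congr rfl fun i _ => Finset.sum_congr rfl fun j _ => ?_
  rw [Real.rpow_two]

lemma frobNorm_mul_le (A : Matrix (Fin K) (Fin N) ℂ) (B : Matrix (Fin N) (Fin K') ℂ) :
    frobNorm (A * B) ≤ frobNorm A * frobNorm B := by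
  simp only [frobNorm_eq_frobenius]
  exact Matrix.frobenius_norm_mul A B

end Aux

open RCLike in
lemma sq_diff_bound {E : Type*} [NormedAddCommGroup E] [InnerProductSpace ℂ E]
    (x y d e : E) :
    |‖x - d‖ ^ 2 - ‖y - e‖ ^ 2| ≤
      (‖x‖ + ‖y‖) * ‖x - y‖ + 2 * (‖x - y‖ * ‖e‖ + ‖x‖ * ‖d - e‖) + (‖d‖ + ‖e‖) * ‖d - e‖ := by
  have h1 := @norm_sub_sq ℂ E _ _ _ x d
  have h2 := @norm_sub_sq ℂ E _ _ _ y e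
  -- cross term identities
  have hid1 : re (inner (𝕜 := ℂ) x d) - re (inner (𝕜 := ℂ) y e) =
      re (inner (𝕜 := ℂ) (x - y) e) + re (inner (𝕜 := ℂ) x (d - e)) := by
    rw [inner_sub_left, inner_sub_right, map_sub, map_sub]; ring
  have c1 : re (inner (𝕜 := ℂ) (x - y) e) ≤ ‖x - y‖ * ‖e‖ := re_inner_le_norm (𝕜 := ℂ) _ _
  have c1' : re (inner (𝕜 := ℂ) (y - x) e) ≤ ‖x - y‖ * ‖e‖ := by
    have := re_inner_le_norm (𝕜 := ℂ) (y - x) e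
    rwa [norm_sub_rev] at this
  have c2 : re (inner (𝕜 := ℂ) x (d - e)) ≤ ‖x‖ * ‖d - e‖ := re_inner_le_norm (𝕜 := ℂ) _ _
  have c2' : re (inner (𝕜 := ℂ) x (e - d)) ≤ ‖x‖ * ‖d - e‖ := by
    have := re_inner_le_norm (𝕜 := ℂ) x (e - d)
    rwa [norm_sub_rev] at this
  have hid2 : re (inner (𝕜 := ℂ) y e) - re (inner (𝕜 := ℂ) x d) =
      re (inner (𝕜 := ℂ) (y - x) e) + re (inner (𝕜 := ℂ) x (e - d)) := by
    rw [inner_sub_left, inner_sub_right, map_sub, map_sub]; ring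
  have hx : ‖x‖ ^ 2 - ‖y‖ ^ 2 ≤ (‖x‖ + ‖y‖) * ‖x - y‖ := by
    have h := norm_sub_norm_le x y
    nlinarith [norm_nonneg x, norm_nonneg y, norm_nonneg (x - y)]
  have hx' : ‖y‖ ^ 2 - ‖x‖ ^ 2 ≤ (‖x‖ + ‖y‖) * ‖x - y‖ := by
    have h := norm_sub_norm_le y x
    rw [norm_sub_rev] at h
    nlinarith [norm_nonneg x, norm_nonneg y, norm_nonneg (x - y)]
  have hd : ‖d‖ ^ 2 - ‖e‖ ^ 2 ≤ (‖d‖ + ‖e‖) * ‖d - e‖ := by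
    have h := norm_sub_norm_le d e
    nlinarith [norm_nonneg d, norm_nonneg e, norm_nonneg (d - e)]
  have hd' : ‖e‖ ^ 2 - ‖d‖ ^ 2 ≤ (‖d‖ + ‖e‖) * ‖d - e‖ := by
    have h := norm_sub_norm_le e d
    rw [norm_sub_rev] at h
    nlinarith [norm_nonneg d, norm_nonneg e, norm_nonneg (d - e)]
  rw [abs_le]
  constructor <;> [skip; skip] <;> nlinarith [hid1, hid2, c1, c1', c2, c2']

lemma phi_pert {K N : ℕ} (U Z B δ ζ η Pmax : ℝ)
    (hU : 0 ≤ U) (hB : 0 ≤ B) (hδ : 0 ≤ δ) (hζ : 0 ≤ ζ)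
    (hη : 0 ≤ η) (hPmax : 0 ≤ Pmax)
    (H Hhat : Matrix (Fin K) (Fin N) ℂ) (D Dhat : Matrix (Fin K) (Fin K) ℂ)
    (V : Matrix (Fin N) (Fin K) ℂ)
    (hH : frobNorm H ≤ B) (hHH : frobNorm (H - Hhat) ≤ B * δ)
    (hD : frobNorm D ≤ ζ * B) (hDhat : frobNorm Dhat ≤ ζ * B * (1 + δ))
    (hDD : frobNorm (D - Dhat) ≤ η * B * δ)
    (hV : frobNorm V ^ 2 ≤ Pmax) :
    phi U Z H V D - phi U Z Hhat V Dhat ≤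
      U * (((2 + δ) * (Pmax + ζ * η) + 2 * (ζ * (1 + δ) + η) * Real.sqrt Pmax) * B ^ 2 * δ) ∧
    phi U Z Hhat V Dhat - phi U Z H V D ≤
      U * (((2 + δ) * (Pmax + ζ * η) + 2 * (ζ * (1 + δ) + η) * Real.sqrt Pmax) * B ^ 2 * δ) := by
  set s := Real.sqrt Pmax with hs_def
  have hs : 0 ≤ s := Real.sqrt_nonneg _
  have hs2 : s ^ 2 = Pmax := Real.sq_sqrt hPmax
  have hVn : frobNorm V ≤ s := by
    rw [← Real.sqrt_sq (frobNorm_nonneg V)]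
    exact Real.sqrt_le_sqrt hV
  set x := flat (H * V) with hx_def
  set y := flat (Hhat * V) with hy_def
  set d := flat D with hd_def
  set e := flat Dhat with he_def
  have hx : ‖x‖ ≤ B * s := by
    rw [hx_def, ← frobNorm_eq]
    exact (frobNorm_mul_le H V).trans (mul_le_mul hH hVn (frobNorm_nonneg _) hB)
  have hxy : ‖x - y‖ ≤ B * δ * s := by
    rw [hx_def, hy_def, ← flat_sub, ← frobNorm_eq]
    rw [show H * V - Hhat * V = (H - Hhat) * V from (Matrix.sub_mul H Hhat V).symm]
    exact (frobNorm_mul_le _ V).trans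
      (mul_le_mul hHH hVn (frobNorm_nonneg _) (by positivity))
  have hy : ‖y‖ ≤ B * s + B * δ * s := by
    have hyd : y = x - (x - y) := by abel
    calc ‖y‖ = ‖x - (x - y)‖ := by rw [← hyd]
      _ ≤ ‖x‖ + ‖x - y‖ := norm_sub_le _ _
      _ ≤ B * s + B * δ * s := add_le_add hx hxy
  have hdb : ‖d‖ ≤ ζ * B := by rw [hd_def, ← frobNorm_eq]; exact hD
  have heb : ‖e‖ ≤ ζ * B * (1 + δ) := by rw [he_def, ← frobNorm_eq]; exact hDhat
  have hde : ‖d - e‖ ≤ η * B * δ := by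
    rw [hd_def, he_def, ← flat_sub, ← frobNorm_eq]; exact hDD
  have hstep : |‖x - d‖ ^ 2 - ‖y - e‖ ^ 2| ≤
      ((2 + δ) * (Pmax + ζ * η) + 2 * (ζ * (1 + δ) + η) * s) * B ^ 2 * δ := by
    refine (sq_diff_bound x y d e).trans ?_
    have h1 : (‖x‖ + ‖y‖) * ‖x - y‖ ≤ (B * s + (B * s + B * δ * s)) * (B * δ * s) :=
      mul_le_mul (add_le_add hx hy) hxy (norm_nonneg _)
        (by positivity)
    have h2 : ‖x - y‖ * ‖e‖ ≤ (B * δ * s) * (ζ * B * (1 + δ)) :=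
      mul_le_mul hxy heb (norm_nonneg _) (by positivity)
    have h3 : ‖x‖ * ‖d - e‖ ≤ (B * s) * (η * B * δ) :=
      mul_le_mul hx hde (norm_nonneg _) (by positivity)
    have h4 : (‖d‖ + ‖e‖) * ‖d - e‖ ≤ (ζ * B + ζ * B * (1 + δ)) * (η * B * δ) :=
      mul_le_mul (add_le_add hdb heb) hde (norm_nonneg _) (by positivity)
    have heq : (B * s + (B * s + B * δ * s)) * (B * δ * s) +
        2 * ((B * δ * s) * (ζ * B * (1 + δ)) + (B * s) * (η * B * δ)) +
        (ζ * B + ζ * B * (1 + δ)) * (η * B * δ) =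
        ((2 + δ) * (Pmax + ζ * η) + 2 * (ζ * (1 + δ) + η) * s) * B ^ 2 * δ := by
      rw [← hs2]; ring
    linarith [h1, h2, h3, h4]
  have e1 : frobNorm (H * V - D) = ‖x - d‖ := by
    rw [hx_def, hd_def, ← flat_sub, ← frobNorm_eq]
  have e2 : frobNorm (Hhat * V - Dhat) = ‖y - e‖ := by
    rw [hy_def, he_def, ← flat_sub, ← frobNorm_eq]
  have hdiff : phi U Z H V D - phi U Z Hhat V Dhat =
      U * (‖x - d‖ ^ 2 - ‖y - e‖ ^ 2) := by
    rw [phi, phi, e1, e2]; ring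
  obtain ⟨hl, hr⟩ := abs_le.mp hstep
  constructor
  · rw [hdiff]
    exact mul_le_mul_of_nonneg_left hr hU
  · have : phi U Z Hhat V Dhat - phi U Z H V D =
        U * (-(‖x - d‖ ^ 2 - ‖y - e‖ ^ 2)) := by rw [phi, phi, e1, e2]; ring
    rw [this]
    exact mul_le_mul_of_nonneg_left (by linarith) hU

/-- Lemma 4 of the paper stated deterministically: the optimality gap caused
by imperfect CSI is at most U·φ̄ = O(δ). -/
theorem optimality_gap_imperfect_csi {K N : ℕ} (U Z B δ ζ η Pmax : ℝ)
    (hU : 0 < U) (hZ : 0 ≤ Z) (hB : 0 ≤ B) (hδ : 0 ≤ δ) (hζ : 0 ≤ ζ)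
    (hη : 0 ≤ η) (hPmax : 0 ≤ Pmax)
    (H Hhat : Matrix (Fin K) (Fin N) ℂ) (D Dhat : Matrix (Fin K) (Fin K) ℂ)
    (Vstar Vopt : Matrix (Fin N) (Fin K) ℂ)
    (hH : frobNorm H ≤ B) (hHH : frobNorm (H - Hhat) ≤ B * δ)
    (hD : frobNorm D ≤ ζ * B) (hDhat : frobNorm Dhat ≤ ζ * B * (1 + δ))
    (hDD : frobNorm (D - Dhat) ≤ η * B * δ)
    (hVs : frobNorm Vstar ^ 2 ≤ Pmax) (hVo : frobNorm Vopt ^ 2 ≤ Pmax)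
    (hopt : phi U Z Hhat Vstar Dhat ≤ phi U Z Hhat Vopt Dhat) :
    phi U Z H Vstar D - phi U Z H Vopt D ≤
      U * (2 * ((2 + δ) * (Pmax + ζ * η) +
        2 * (ζ * (1 + δ) + η) * Real.sqrt Pmax) * B ^ 2 * δ) := by
  have h1 := (phi_pert U Z B δ ζ η Pmax hU.le hB hδ hζ hη hPmax
    H Hhat D Dhat Vstar hH hHH hD hDhat hDD hVs).1
  have h2 := (phi_pert U Z B δ ζ η Pmax hU.le hB hδ hζ hη hPmax
    H Hhat D Dhat Vopt hH hHH hD hDhat hDD hVo).2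
  have hring : U * (2 * ((2 + δ) * (Pmax + ζ * η) +
      2 * (ζ * (1 + δ) + η) * Real.sqrt Pmax) * B ^ 2 * δ) =
      U * (((2 + δ) * (Pmax + ζ * η) + 2 * (ζ * (1 + δ) + η) * Real.sqrt Pmax) * B ^ 2 * δ) +
      U * (((2 + δ) * (Pmax + ζ * η) + 2 * (ζ * (1 + δ) + η) * Real.sqrt Pmax) * B ^ 2 * δ) := by
    ring
  linarith
end

section
/- Let U > 0, Z ≥ 0, B ≥ 0, δ ≥ 0, ζ ≥ 0, η ≥ 0, and 0 ≤ P̄ ≤ P_max be real numbers, define φ(H,V,D) = U‖HV − D‖_F² + Z‖V‖_F², S = (1/2)·max{(P_max − P̄)², P̄²}, and φ̄ = 2·[(2+δ)(P_max + ζη) + 2(ζ(1+δ) + η)·√P_max]·B²·δ. Let H, Ĥ be K×N complex matrices, D, D̂ K×K complex matrices, and V*, V^opt N×K complex matrices satisfying ‖H‖_F ≤ B, ‖H − Ĥ‖_F ≤ Bδ, ‖D‖_F ≤ ζB, ‖D̂‖_F ≤ ζB(1+δ), ‖D − D̂‖_F ≤ ηBδ, ‖V*‖_F² ≤ P_max,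 ‖V^opt‖_F² ≤ P_max, and φ(Ĥ, V*, D̂) ≤ φ(Ĥ, V^opt, D̂). Let Z⁺ = max{Z + ‖V*‖_F² − P̄, 0}. Then (1/2)(Z⁺² − Z²) + U·‖H V* − D‖_F² ≤ U·‖H V^opt − D‖_F² + Z·(‖V^opt‖_F² − P̄) + U·φ̄ + S. -/
open Matrix

section FrobAux

attribute [local instance] Matrix.frobeniusSeminormedAddCommGroup
  Matrix.frobeniusNormedAddCommGroup

set_option linter.unusedSectionVars false

variable {m n p : Type*} [Fintype m] [Fintype n] [Fintype p]

/-- reinterpret a matrix as an element of the `L²` pi-type. -/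
noncomputable def toE (A : Matrix m n ℂ) : PiLp 2 (fun _ : m => PiLp 2 fun _ : n => ℂ) :=
  WithLp.toLp 2 (fun i => WithLp.toLp 2 (A i))

lemma norm_toE (A : Matrix m n ℂ) : ‖toE A‖ = ‖A‖ := rfl

lemma toE_add (A B : Matrix m n ℂ) : toE (A + B) = toE A + toE B := rfl
lemma toE_sub (A B : Matrix m n ℂ) : toE (A - B) = toE A - toE B := rfl

lemma frobNorm_eq_s11 (A : Matrix m n ℂ) : frobNorm A = ‖A‖ := by
  rw [Matrix.frobenius_norm_def, frobNorm, Real.sqrt_eq_rpow]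
  norm_num [Real.rpow_two]

/-- real Frobenius inner product -/
noncomputable def rip (A B : Matrix m n ℂ) : ℝ := (inner ℂ (toE A) (toE B) : ℂ).re

lemma rip_self (A : Matrix m n ℂ) : rip A A = ‖A‖ ^ 2 := by
  have h := inner_self_eq_norm_sq (𝕜 := ℂ) (toE A)
  rw [rip, ← norm_toE A]
  exact h

lemma rip_comm (A B : Matrix m n ℂ) : rip A B = rip B A := by
  rw [rip, rip, ← inner_conj_symm, Complex.conj_re]

lemma rip_add_left (A B C : Matrix m n ℂ) : rip (A + B) C = rip A C + rip B C := by
  rw [rip, rip, rip, toE_add, inner_add_left, Complex.add_re]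

lemma rip_add_right (A B C : Matrix m n ℂ) : rip A (B + C) = rip A B + rip A C := by
  rw [rip, rip, rip, toE_add, inner_add_right, Complex.add_re]

lemma rip_sub_left (A B C : Matrix m n ℂ) : rip (A - B) C = rip A C - rip B C := by
  rw [rip, rip, rip, toE_sub, inner_sub_left, Complex.sub_re]

lemma rip_sub_right (A B C : Matrix m n ℂ) : rip A (B - C) = rip A B - rip A C := by
  rw [rip, rip, rip, toE_sub, inner_sub_right, Complex.sub_re]

lemma abs_rip_le (A B : Matrix m n ℂ) : |rip A B| ≤ ‖A‖ * ‖B‖ := by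
  rw [rip, ← norm_toE A, ← norm_toE B]
  refine (Complex.abs_re_le_norm _).trans ?_
  exact norm_inner_le_norm _ _

lemma parallel (A B : Matrix m n ℂ) :
    ‖A + B‖ ^ 2 + ‖A - B‖ ^ 2 = 2 * (‖A‖ ^ 2 + ‖B‖ ^ 2) := by
  have := parallelogram_law_with_norm ℂ (toE A) (toE B)
  simpa [← toE_add, ← toE_sub, norm_toE, sq] using this

lemma polar (X Y : Matrix m n ℂ) : ‖X‖ ^ 2 - ‖Y‖ ^ 2 = rip (X + Y) (X - Y) := by
  rw [rip_add_left, rip_sub_right, rip_sub_right, rip_self, rip_self, rip_comm Y X]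
  ring

end FrobAux

section Main
set_option maxHeartbeats 1000000

attribute [local instance] Matrix.frobeniusSeminormedAddCommGroup
  Matrix.frobeniusNormedAddCommGroup

/-- The optimality-gap bound (Lemma 4 content). -/
lemma gap_bound {K N : ℕ} (B δ ζ η Pmax : ℝ)
    (hB : 0 ≤ B) (hδ : 0 ≤ δ) (hζ : 0 ≤ ζ) (hη : 0 ≤ η)
    (H Hhat : Matrix (Fin K) (Fin N) ℂ) (D Dhat : Matrix (Fin K) (Fin K) ℂ)
    (Vstar Vopt : Matrix (Fin N) (Fin K) ℂ)
    (hH : ‖H‖ ≤ B) (hHH : ‖H - Hhat‖ ≤ B * δ)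
    (hD : ‖D‖ ≤ ζ * B) (hDhat : ‖Dhat‖ ≤ ζ * B * (1 + δ))
    (hDD : ‖D - Dhat‖ ≤ η * B * δ)
    (hVs : ‖Vstar‖ ^ 2 ≤ Pmax) (hVo : ‖Vopt‖ ^ 2 ≤ Pmax) :
    (‖H * Vstar - D‖ ^ 2 - ‖H * Vopt - D‖ ^ 2) +
      (‖Hhat * Vopt - Dhat‖ ^ 2 - ‖Hhat * Vstar - Dhat‖ ^ 2) ≤
    2 * ((2 + δ) * (Pmax + ζ * η) +
      2 * (ζ * (1 + δ) + η) * Real.sqrt Pmax) * B ^ 2 * δ := by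
  obtain ⟨Hd, rfl⟩ : ∃ Hd, H = Hhat + Hd := ⟨H - Hhat, by abel⟩
  obtain ⟨Dd, rfl⟩ : ∃ Dd, D = Dhat + Dd := ⟨D - Dhat, by abel⟩
  rw [add_sub_cancel_left] at hHH hDD
  set Sg := Vstar + Vopt with hSg
  set Wd := Vstar - Vopt with hWd
  have hPm0 : (0:ℝ) ≤ Pmax := le_trans (sq_nonneg _) hVs
  have hsq : Real.sqrt Pmax ^ 2 = Pmax := Real.sq_sqrt hPm0
  have hVsn : ‖Vstar‖ ≤ Real.sqrt Pmax := by
    rw [← Real.sqrt_sq (norm_nonneg Vstar)]; exact Real.sqrt_le_sqrt hVs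
  have hVon : ‖Vopt‖ ≤ Real.sqrt Pmax := by
    rw [← Real.sqrt_sq (norm_nonneg Vopt)]; exact Real.sqrt_le_sqrt hVo
  have hWn : ‖Wd‖ ≤ 2 * Real.sqrt Pmax :=
    (norm_sub_le _ _).trans (by linarith)
  have hSWn : ‖Sg‖ * ‖Wd‖ ≤ 2 * Pmax := by
    have hp := parallel Vstar Vopt
    nlinarith [sq_nonneg (‖Sg‖ - ‖Wd‖), norm_nonneg Sg, norm_nonneg Wd]
  have hHhatn : ‖Hhat‖ ≤ B * (1 + δ) := by
    have : ‖Hhat‖ ≤ ‖Hhat + Hd‖ + ‖Hd‖ := by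
      calc ‖Hhat‖ = ‖Hhat + Hd - Hd‖ := by rw [add_sub_cancel_right]
        _ ≤ ‖Hhat + Hd‖ + ‖Hd‖ := norm_sub_le _ _
    nlinarith
  -- the key algebraic identity
  have g1 : ‖(Hhat + Hd) * Vstar - (Dhat + Dd)‖ ^ 2
      - ‖(Hhat + Hd) * Vopt - (Dhat + Dd)‖ ^ 2
      = rip ((Hhat + Hd) * Sg - ((Dhat + Dd) + (Dhat + Dd))) ((Hhat + Hd) * Wd) := by
    rw [polar]
    congr 1
    · rw [hSg, Matrix.mul_add]; abel
    · rw [hWd, Matrix.mul_sub]; abel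
  have g2 : ‖Hhat * Vstar - Dhat‖ ^ 2 - ‖Hhat * Vopt - Dhat‖ ^ 2
      = rip (Hhat * Sg - (Dhat + Dhat)) (Hhat * Wd) := by
    rw [polar]
    congr 1
    · rw [hSg, Matrix.mul_add]; abel
    · rw [hWd, Matrix.mul_sub]; abel
  have key : (‖(Hhat + Hd) * Vstar - (Dhat + Dd)‖ ^ 2
        - ‖(Hhat + Hd) * Vopt - (Dhat + Dd)‖ ^ 2) +
      (‖Hhat * Vopt - Dhat‖ ^ 2 - ‖Hhat * Vstar - Dhat‖ ^ 2)
      = rip (Hd * Sg) ((Hhat + Hd) * Wd) + rip (Hhat * Sg) (Hd * Wd)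
        - 2 * rip Dd ((Hhat + Hd) * Wd) - 2 * rip Dhat (Hd * Wd) := by
    have hg2' : ‖Hhat * Vopt - Dhat‖ ^ 2 - ‖Hhat * Vstar - Dhat‖ ^ 2
        = -(rip (Hhat * Sg - (Dhat + Dhat)) (Hhat * Wd)) := by rw [← g2]; ring
    rw [g1, hg2']
    simp only [Matrix.add_mul, rip_add_left, rip_add_right, rip_sub_left, rip_sub_right]
    ring
  rw [key]
  -- bound the four terms
  have bnd : ∀ (X Y : Matrix (Fin K) (Fin K) ℂ)
      (cx cy : ℝ), ‖X‖ ≤ cx → ‖Y‖ ≤ cy → 0 ≤ cx → rip X Y ≤ cx * cy := by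
    intro X Y cx cy hx hy hcx
    refine le_trans (le_abs_self _) ((abs_rip_le X Y).trans ?_)
    exact mul_le_mul hx hy (norm_nonneg _) hcx
  have nHd : ∀ (V : Matrix (Fin N) (Fin K) ℂ), ‖Hd * V‖ ≤ B * δ * ‖V‖ := fun V =>
    (Matrix.frobenius_norm_mul Hd V).trans
      (mul_le_mul_of_nonneg_right hHH (norm_nonneg _))
  have nH : ∀ (V : Matrix (Fin N) (Fin K) ℂ), ‖(Hhat + Hd) * V‖ ≤ B * ‖V‖ := fun V =>
    (Matrix.frobenius_norm_mul _ V).trans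
      (mul_le_mul_of_nonneg_right hH (norm_nonneg _))
  have nHhat : ∀ (V : Matrix (Fin N) (Fin K) ℂ), ‖Hhat * V‖ ≤ B * (1 + δ) * ‖V‖ := fun V =>
    (Matrix.frobenius_norm_mul _ V).trans
      (mul_le_mul_of_nonneg_right hHhatn (norm_nonneg _))
  have t1 : rip (Hd * Sg) ((Hhat + Hd) * Wd) ≤ (B * δ * ‖Sg‖) * (B * ‖Wd‖) :=
    bnd _ _ _ _ (nHd Sg) (nH Wd) (by positivity)
  have t2 : rip (Hhat * Sg) (Hd * Wd) ≤ (B * (1 + δ) * ‖Sg‖) * (B * δ * ‖Wd‖) :=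
    bnd _ _ _ _ (nHhat Sg) (nHd Wd) (by positivity)
  have t3 : -(rip Dd ((Hhat + Hd) * Wd)) ≤ (η * B * δ) * (B * (2 * Real.sqrt Pmax)) := by
    have := abs_rip_le Dd ((Hhat + Hd) * Wd)
    have h2 : ‖Dd‖ * ‖(Hhat + Hd) * Wd‖ ≤ (η * B * δ) * (B * (2 * Real.sqrt Pmax)) := by
      refine mul_le_mul hDD ((nH Wd).trans ?_) (norm_nonneg _) (by positivity)
      exact mul_le_mul_of_nonneg_left hWn hB
    nlinarith [abs_nonneg (rip Dd ((Hhat + Hd) * Wd)), neg_abs_le (rip Dd ((Hhat + Hd) * Wd))]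
  have t4 : -(rip Dhat (Hd * Wd)) ≤ (ζ * B * (1 + δ)) * (B * δ * (2 * Real.sqrt Pmax)) := by
    have := abs_rip_le Dhat (Hd * Wd)
    have h2 : ‖Dhat‖ * ‖Hd * Wd‖ ≤ (ζ * B * (1 + δ)) * (B * δ * (2 * Real.sqrt Pmax)) := by
      refine mul_le_mul hDhat ((nHd Wd).trans ?_) (norm_nonneg _) (by positivity)
      exact mul_le_mul_of_nonneg_left hWn (by positivity)
    nlinarith [neg_abs_le (rip Dhat (Hd * Wd))]
  have hq1 : (B * δ * ‖Sg‖) * (B * ‖Wd‖) ≤ B * δ * B * (2 * Pmax) := by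
    have : (B * δ * ‖Sg‖) * (B * ‖Wd‖) = (B * δ * B) * (‖Sg‖ * ‖Wd‖) := by ring
    rw [this]
    exact mul_le_mul_of_nonneg_left hSWn (by positivity)
  have hq2 : (B * (1 + δ) * ‖Sg‖) * (B * δ * ‖Wd‖) ≤ B * (1 + δ) * (B * δ) * (2 * Pmax) := by
    have : (B * (1 + δ) * ‖Sg‖) * (B * δ * ‖Wd‖)
        = (B * (1 + δ) * (B * δ)) * (‖Sg‖ * ‖Wd‖) := by ring
    rw [this]
    exact mul_le_mul_of_nonneg_left hSWn (by positivity)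
  have hfinal : B * δ * B * (2 * Pmax) + B * (1 + δ) * (B * δ) * (2 * Pmax)
      + 2 * ((η * B * δ) * (B * (2 * Real.sqrt Pmax)))
      + 2 * ((ζ * B * (1 + δ)) * (B * δ * (2 * Real.sqrt Pmax)))
      ≤ 2 * ((2 + δ) * (Pmax + ζ * η) + 2 * (ζ * (1 + δ) + η) * Real.sqrt Pmax)
        * B ^ 2 * δ := by
    have hz : 0 ≤ 2 * ((2 + δ) * (ζ * η)) * B ^ 2 * δ := by positivity
    nlinarith [hz]
  linarith [t1, t2, t3, t4, hq1, hq2]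


/-- Lyapunov drift bound (Lemma 1 content). -/
lemma drift_bound (Z x Pbar Pmax : ℝ) (hZ : 0 ≤ Z) (hx : 0 ≤ x) (hxP : x ≤ Pmax)
    (hPbar : 0 ≤ Pbar) :
    (1 / 2) * ((max (Z + x - Pbar) 0) ^ 2 - Z ^ 2) ≤
      Z * x - Z * Pbar + (1 / 2) * max ((Pmax - Pbar) ^ 2) (Pbar ^ 2) := by
  have hmax_sq : (max (Z + x - Pbar) 0) ^ 2 ≤ (Z + x - Pbar) ^ 2 := by
    rcases le_total (Z + x - Pbar) 0 with h | h
    · rw [max_eq_right h]; simpa using sq_nonneg (Z + x - Pbar)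
    · rw [max_eq_left h]
  have hdev : (x - Pbar) ^ 2 ≤ max ((Pmax - Pbar) ^ 2) (Pbar ^ 2) := by
    rcases le_total Pbar x with h | h
    · exact le_max_of_le_left (by nlinarith)
    · exact le_max_of_le_right (by nlinarith)
  nlinarith [hmax_sq, hdev]

/-- The deterministic inequality (eq. lm5-2) at the heart of Lemma 5,
combining the Lyapunov drift bound of Lemma 1 with the optimality-gap
bound of Lemma 4. -/
theorem drift_plus_penalty_optimality_bound {K N : ℕ}
    (U Z B δ ζ η Pbar Pmax : ℝ)
    (hU : 0 < U) (hZ : 0 ≤ Z) (hB : 0 ≤ B) (hδ : 0 ≤ δ) (hζ : 0 ≤ ζ)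
    (hη : 0 ≤ η) (hPbar : 0 ≤ Pbar) (hPP : Pbar ≤ Pmax)
    (H Hhat : Matrix (Fin K) (Fin N) ℂ) (D Dhat : Matrix (Fin K) (Fin K) ℂ)
    (Vstar Vopt : Matrix (Fin N) (Fin K) ℂ)
    (hH : frobNorm H ≤ B) (hHH : frobNorm (H - Hhat) ≤ B * δ)
    (hD : frobNorm D ≤ ζ * B) (hDhat : frobNorm Dhat ≤ ζ * B * (1 + δ))
    (hDD : frobNorm (D - Dhat) ≤ η * B * δ)
    (hVs : frobNorm Vstar ^ 2 ≤ Pmax) (hVo : frobNorm Vopt ^ 2 ≤ Pmax)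
    (hopt : phi U Z Hhat Vstar Dhat ≤ phi U Z Hhat Vopt Dhat) :
    (1 / 2) * ((max (Z + frobNorm Vstar ^ 2 - Pbar) 0) ^ 2 - Z ^ 2) +
        U * frobNorm (H * Vstar - D) ^ 2 ≤
      U * frobNorm (H * Vopt - D) ^ 2 + Z * (frobNorm Vopt ^ 2 - Pbar) +
        U * (2 * ((2 + δ) * (Pmax + ζ * η) +
          2 * (ζ * (1 + δ) + η) * Real.sqrt Pmax) * B ^ 2 * δ) +
        (1 / 2) * max ((Pmax - Pbar) ^ 2) (Pbar ^ 2) := by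
  simp only [phi, frobNorm_eq_s11] at hopt hH hHH hD hDhat hDD hVs hVo ⊢
  have hgap := gap_bound B δ ζ η Pmax hB hδ hζ hη H Hhat D Dhat Vstar Vopt
    hH hHH hD hDhat hDD hVs hVo
  set φv : ℝ := 2 * ((2 + δ) * (Pmax + ζ * η) +
      2 * (ζ * (1 + δ) + η) * Real.sqrt Pmax) * B ^ 2 * δ with hφv
  have hgapU : U * ((‖H * Vstar - D‖ ^ 2 - ‖H * Vopt - D‖ ^ 2) +
      (‖Hhat * Vopt - Dhat‖ ^ 2 - ‖Hhat * Vstar - Dhat‖ ^ 2)) ≤ U * φv :=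
    mul_le_mul_of_nonneg_left hgap hU.le
  have hgapU' : U * ‖H * Vstar - D‖ ^ 2 - U * ‖H * Vopt - D‖ ^ 2 +
      U * ‖Hhat * Vopt - Dhat‖ ^ 2 - U * ‖Hhat * Vstar - Dhat‖ ^ 2 ≤ U * φv := by
    nlinarith [hgapU]
  have hdrift := drift_bound Z (‖Vstar‖ ^ 2) Pbar Pmax hZ (sq_nonneg _) hVs hPbar
  nlinarith [hdrift, hgapU', hopt]

end Main
end

section
/- Let ε > 0, S' > 0, B ≥ 0, δ ≥ 0, ξ ≥ 0, and 0 ≤ P̄ ≤ P_max be real numbers, and set U = S'/ε. Let Z, p : ℕ → ℝ satisfy Z(0) = 0, 0 ≤ p(t) ≤ P_max for all t, and Z(t+1) = max{Z(t) + p(t) − P̄, 0} for all t. Suppose that for every t, Z(t) ≥ U·B²(1+δ)²·ξ implies p(t) ≤ P̄. Then for every integer T ≥ 1: (1/T)·Σ_{t=0}^{T−1} p(t) ≤ P̄ + (S'·B²(1+δ)²·ξ + ε·(P_max − P̄)) / (ε·T). -/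
/-- Deterministic content of the per-cell transmit power bound (38) in
Theorem 2 (with drift-plus-penalty weight U = S'/ε). -/
theorem percell_time_averaged_power_bound
    (ε S' B δ ξ Pbar Pmax : ℝ)
    (hε : 0 < ε) (hS : 0 < S') (hB : 0 ≤ B) (hδ : 0 ≤ δ) (hξ : 0 ≤ ξ)
    (hPbar : 0 ≤ Pbar) (hPP : Pbar ≤ Pmax)
    (Z p : ℕ → ℝ) (hZ0 : Z 0 = 0)
    (hp : ∀ t, 0 ≤ p t ∧ p t ≤ Pmax)
    (hrec : ∀ t, Z (t + 1) = max (Z t + p t - Pbar) 0)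
    (hthr : ∀ t, (S' / ε) * B ^ 2 * (1 + δ) ^ 2 * ξ ≤ Z t → p t ≤ Pbar) :
    ∀ T : ℕ, 1 ≤ T →
      (1 / (T : ℝ)) * ∑ t ∈ Finset.range T, p t ≤
        Pbar + (S' * B ^ 2 * (1 + δ) ^ 2 * ξ + ε * (Pmax - Pbar)) / (ε * T) := by
  set C : ℝ := (S' / ε) * B ^ 2 * (1 + δ) ^ 2 * ξ with hCdef
  have hC : 0 ≤ C := by positivity
  -- Z is bounded by C + (Pmax - Pbar)
  have hZb : ∀ t, Z t ≤ C + (Pmax - Pbar) := by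
    intro t
    induction t with
    | zero => rw [hZ0]; nlinarith
    | succ n ih =>
      rw [hrec n]
      rcases le_or_gt C (Z n) with h | h
      · have hpn := hthr n h
        have : Z n + p n - Pbar ≤ Z n := by linarith
        exact max_le (this.trans ih) (by nlinarith)
      · have := (hp n).2
        exact max_le (by linarith) (by nlinarith)
  -- telescoping sum bound
  have hsum : ∀ T : ℕ, ∑ t ∈ Finset.range T, p t ≤ T * Pbar + Z T := by
    intro T
    induction T with
    | zero => simp [hZ0]
    | succ n ih =>
      rw [Finset.sum_range_succ]
      have hZ : Z n + p n - Pbar ≤ Z (n + 1) := by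
        rw [hrec n]; exact le_max_left _ _
      push_cast
      linarith
  intro T hT
  have hTpos : (0 : ℝ) < T := by exact_mod_cast hT
  have h1 : ∑ t ∈ Finset.range T, p t ≤ T * Pbar + (C + (Pmax - Pbar)) :=
    (hsum T).trans (by linarith [hZb T])
  have h2 : (1 / (T : ℝ)) * ∑ t ∈ Finset.range T, p t ≤
      Pbar + (C + (Pmax - Pbar)) / T := by
    rw [div_mul_eq_mul_div, one_mul, div_le_iff₀ hTpos]
    have : (Pbar + (C + (Pmax - Pbar)) / T) * T = T * Pbar + (C + (Pmax - Pbar)) := by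
      field_simp
    rw [this]; exact h1
  refine h2.trans (le_of_eq ?_)
  rw [hCdef]
  field_simp
end
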